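/- (ADO converges to a Nash equilibrium in at most as many iterations as there are pure strategies.) Let A : S₁ × S₂ → ℝ be the payoff matrix of a finite two-player zero-sum game. Let (T₁ᵗ)_{t≥0}, (T₂ᵗ)_{t≥0} be sequences of nonempty subsets of S₁, S₂ such that for each t: xᵗ ∈ Δ(T₁ᵗ) attains max_{x∈Δ(T₁ᵗ)} min_{y∈Δ(S₂)} v(x,y); yᵗ ∈ Δ(T₂ᵗ) attains min_{y∈Δ(T₂ᵗ)} max_{x∈Δ(S₁)} v(x,y); T₁ᵗ⁺¹ = T₁ᵗ ∪ {β₁ᵗ} where β₁ᵗ ∈ S₁ is a pure best response to yᵗ chosen outside T₁ᵗ whenever some pure best response to yᵗ lies outside T₁ᵗ; and T₂ᵗ⁺¹ = T₂ᵗ ∪ {β₂ᵗ} where β₂ᵗ ∈ S₂ is a pure best response to xᵗ chosen outside T₂ᵗ whenever some pure best response to xᵗ lies outside T₂ᵗ. Then there exists t ≤ |S₁| + |S₂| such that (xᵗ, yᵗ) is a Nash equilibrium of the full game. -/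

import Mathlib

open scoped BigOperators

/-- The set of mixed strategies over a finite action set `S`. -/
def mixed (S : Type*) [Fintype S] : Set (S → ℝ) :=
  {x | (∀ a, 0 ≤ x a) ∧ ∑ a, x a = 1}

/-- Mixed strategies supported in a subset `T` of the action set. -/
def mixedOn {S : Type*} [Fintype S] (T : Set S) : Set (S → ℝ) :=
  {x | x ∈ mixed S ∧ ∀ a ∉ T, x a = 0}

/-- Expected payoff to player 1: `v(x,y) = ∑ x(a) A(a,b) y(b)`. -/
def payoff {S₁ S₂ : Type*} [Fintype S₁] [Fintype S₂]
    (A : S₁ → S₂ → ℝ) (x : S₁ → ℝ) (y : S₂ → ℝ) : ℝ :=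
  ∑ a, ∑ b, x a * A a b * y b

/-- `min_{y ∈ Δ(S₂)} v(x,y)`, the value of player 1's strategy `x`
against a best-responding opponent. -/
noncomputable def minVal {S₁ S₂ : Type*} [Fintype S₁] [Fintype S₂]
    (A : S₁ → S₂ → ℝ) (x : S₁ → ℝ) : ℝ :=
  sInf (payoff A x '' mixed S₂)

/-- `max_{x ∈ Δ(S₁)} v(x,y)`, the value of a best response against
player 2's strategy `y`. -/
noncomputable def maxVal {S₁ S₂ : Type*} [Fintype S₁] [Fintype S₂]
    (A : S₁ → S₂ → ℝ) (y : S₂ → ℝ) : ℝ :=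
  sSup ((fun x => payoff A x y) '' mixed S₁)

/-- Exploitability of the profile `(x,y)`:
`e(x,y) = max_{x'} v(x',y) - min_{y'} v(x,y')`. -/
noncomputable def exploit {S₁ S₂ : Type*} [Fintype S₁] [Fintype S₂]
    (A : S₁ → S₂ → ℝ) (x : S₁ → ℝ) (y : S₂ → ℝ) : ℝ :=
  maxVal A y - minVal A x

/-- The mixed strategy placing probability 1 on the pure strategy `a`. -/
def pureStrat {S : Type*} [DecidableEq S] (a : S) : S → ℝ :=
  fun b => if b = a then 1 else 0


section Basic

variable {S₁ S₂ : Type*} [Fintype S₁] [Fintype S₂]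

lemma mixed_eq_stdSimplex (S : Type*) [Fintype S] : mixed S = stdSimplex ℝ S := rfl

lemma pure_mem_mixed {S : Type*} [Fintype S] [DecidableEq S] (a : S) :
    pureStrat a ∈ mixed S := by
  constructor
  · intro b; unfold pureStrat; split <;> norm_num
  · simp [pureStrat]

lemma pure_mem_mixedOn {S : Type*} [Fintype S] [DecidableEq S] {T : Set S} {a : S}
    (ha : a ∈ T) : pureStrat a ∈ mixedOn T := by
  refine ⟨pure_mem_mixed a, fun b hb => ?_⟩
  unfold pureStrat
  simp only [ite_eq_right_iff]
  rintro rfl; exact absurd ha hb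

lemma mixedOn_subset_mixed {S : Type*} [Fintype S] {T : Set S} :
    mixedOn T ⊆ mixed S := fun _ h => h.1

lemma mixedOn_mono {S : Type*} [Fintype S] {T T' : Set S} (h : T ⊆ T') :
    mixedOn T ⊆ mixedOn T' := fun z hz => ⟨hz.1, fun a ha => hz.2 a fun ha' => ha (h ha')⟩

lemma payoff_eq_sum_col (A : S₁ → S₂ → ℝ) (x : S₁ → ℝ) (y : S₂ → ℝ) :
    payoff A x y = ∑ b, (∑ a, x a * A a b) * y b := by
  rw [payoff, Finset.sum_comm]
  exact Finset.sum_congr rfl fun b _ => (Finset.sum_mul _ _ _).symm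

lemma payoff_eq_sum_row (A : S₁ → S₂ → ℝ) (x : S₁ → ℝ) (y : S₂ → ℝ) :
    payoff A x y = ∑ a, x a * ∑ b, A a b * y b := by
  unfold payoff
  exact Finset.sum_congr rfl fun a _ => by
    rw [Finset.mul_sum]; exact Finset.sum_congr rfl fun b _ => by ring

lemma payoff_pure_right [DecidableEq S₂] (A : S₁ → S₂ → ℝ) (x : S₁ → ℝ) (b : S₂) :
    payoff A x (pureStrat b) = ∑ a, x a * A a b := by
  rw [payoff_eq_sum_col]
  simp [pureStrat]

lemma payoff_pure_left [DecidableEq S₁] (A : S₁ → S₂ → ℝ) (a : S₁) (y : S₂ → ℝ) :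
    payoff A (pureStrat a) y = ∑ b, A a b * y b := by
  rw [payoff_eq_sum_row]
  simp [pureStrat]

/-- payoff is at least `v` if every column in the support set beats `v`. -/
lemma le_payoff_of_cols {A : S₁ → S₂ → ℝ} {x : S₁ → ℝ} {y : S₂ → ℝ} {Q : Set S₂} {v : ℝ}
    (hy : y ∈ mixedOn Q) (h : ∀ b ∈ Q, v ≤ ∑ a, x a * A a b) : v ≤ payoff A x y := by
  rw [payoff_eq_sum_col]
  have h1 : v = ∑ b, v * y b := by rw [← Finset.mul_sum, hy.1.2, mul_one]
  rw [h1]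
  refine Finset.sum_le_sum fun b _ => ?_
  by_cases hb : b ∈ Q
  · exact mul_le_mul_of_nonneg_right (h b hb) (hy.1.1 b)
  · rw [hy.2 b hb, mul_zero, mul_zero]

/-- payoff is at most `v` if every row in the support set is held to `v`. -/
lemma payoff_le_of_rows {A : S₁ → S₂ → ℝ} {x : S₁ → ℝ} {y : S₂ → ℝ} {P : Set S₁} {v : ℝ}
    (hx : x ∈ mixedOn P) (h : ∀ a ∈ P, (∑ b, A a b * y b) ≤ v) : payoff A x y ≤ v := by
  rw [payoff_eq_sum_row]
  have h1 : v = ∑ a, x a * v := by rw [← Finset.sum_mul, hx.1.2, one_mul]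
  rw [h1]
  refine Finset.sum_le_sum fun a _ => ?_
  by_cases ha : a ∈ P
  · exact mul_le_mul_of_nonneg_left (h a ha) (hx.1.1 a)
  · rw [hx.2 a ha, zero_mul, zero_mul]

variable [Nonempty S₁] [Nonempty S₂] [DecidableEq S₁] [DecidableEq S₂]

lemma minVal_eq (A : S₁ → S₂ → ℝ) (x : S₁ → ℝ) :
    minVal A x = Finset.univ.inf' Finset.univ_nonempty (fun b => ∑ a, x a * A a b) := by
  set m := Finset.univ.inf' Finset.univ_nonempty (fun b => ∑ a, x a * A a b) with hm
  obtain ⟨b₀, -, hb₀⟩ := Finset.exists_mem_eq_inf' (Finset.univ_nonempty)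
    (fun b => ∑ a, x a * A a b)
  have hlb : ∀ z ∈ payoff A x '' mixed S₂, m ≤ z := by
    rintro z ⟨y, hy, rfl⟩
    refine le_payoff_of_cols (Q := Set.univ) ⟨hy, by simp⟩ fun b _ => ?_
    exact Finset.inf'_le _ (Finset.mem_univ b)
  have hmem : m ∈ payoff A x '' mixed S₂ := by
    refine ⟨pureStrat b₀, pure_mem_mixed b₀, ?_⟩
    rw [payoff_pure_right, ← hb₀]
  exact le_antisymm (csInf_le ⟨m, hlb⟩ hmem) (le_csInf ⟨m, hmem⟩ hlb)

lemma maxVal_eq (A : S₁ → S₂ → ℝ) (y : S₂ → ℝ) :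
    maxVal A y = Finset.univ.sup' Finset.univ_nonempty (fun a => ∑ b, A a b * y b) := by
  obtain ⟨a₀, -, ha₀⟩ := Finset.exists_mem_eq_sup' (Finset.univ_nonempty)
    (fun a => (∑ b, A a b * y b : ℝ))
  set m : ℝ := Finset.univ.sup' Finset.univ_nonempty (fun a => ∑ b, A a b * y b) with hm
  have hub : ∀ z ∈ (fun x => payoff A x y) '' mixed S₁, z ≤ m := by
    rintro z ⟨x, hx, rfl⟩
    refine payoff_le_of_rows (P := Set.univ) ⟨hx, by simp⟩ fun a _ => ?_
    exact Finset.le_sup' (fun a => (∑ b, A a b * y b : ℝ)) (Finset.mem_univ a)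
  have hmem : m ∈ (fun x => payoff A x y) '' mixed S₁ := by
    refine ⟨pureStrat a₀, pure_mem_mixed a₀, ?_⟩
    show payoff A (pureStrat a₀) y = m
    rw [payoff_pure_left, ← ha₀]
  exact le_antisymm (csSup_le ⟨m, hmem⟩ hub) (le_csSup ⟨m, hub⟩ hmem)

end Basic

section Topo

variable {S : Type*} [Fintype S]

lemma isClosed_mixedOn_aux (T : Set S) :
    IsClosed {x : S → ℝ | ∀ a ∉ T, x a = 0} := by
  have : {x : S → ℝ | ∀ a ∉ T, x a = 0} = ⋂ a, ⋂ (_ : a ∉ T), {x : S → ℝ | x a = 0} := by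
    ext x; simp [Set.mem_iInter]
  rw [this]
  exact isClosed_iInter fun a => isClosed_iInter fun _ =>
    isClosed_eq (continuous_apply a) continuous_const

lemma isCompact_mixedOn (T : Set S) : IsCompact (mixedOn T) := by
  have : mixedOn T = mixed S ∩ {x : S → ℝ | ∀ a ∉ T, x a = 0} := rfl
  rw [this, mixed_eq_stdSimplex]
  exact (isCompact_stdSimplex ℝ S).inter_right (isClosed_mixedOn_aux T)

lemma convex_mixedOn (T : Set S) : Convex ℝ (mixedOn T) := by
  intro u hu w hw s t hs ht hst
  refine ⟨⟨fun a => ?_, ?_⟩, fun a ha => ?_⟩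
  · have := hu.1.1 a; have := hw.1.1 a
    simp only [Pi.add_apply, Pi.smul_apply, smul_eq_mul]
    nlinarith
  · simp only [Pi.add_apply, Pi.smul_apply, smul_eq_mul]
    rw [Finset.sum_add_distrib, ← Finset.mul_sum, ← Finset.mul_sum, hu.1.2, hw.1.2]
    linarith
  · simp only [Pi.add_apply, Pi.smul_apply, smul_eq_mul, hu.2 a ha, hw.2 a ha]
    ring

lemma mixedOn_nonempty [DecidableEq S] {T : Set S} (hT : T.Nonempty) :
    (mixedOn T).Nonempty := by
  obtain ⟨a, ha⟩ := hT
  exact ⟨pureStrat a, pure_mem_mixedOn ha⟩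

lemma continuous_finset_inf' {ι : Type*} {s : Finset ι} (hs : s.Nonempty)
    (f : ι → (S → ℝ) → ℝ) (hf : ∀ i, Continuous (f i)) :
    Continuous fun x => s.inf' hs (fun i => f i x) := by
  induction hs using Finset.Nonempty.cons_induction with
  | singleton c => simpa using hf c
  | cons c s hcs hs ih =>
      have : (fun x => (Finset.cons c s hcs).inf' (Finset.cons_nonempty hcs) (fun i => f i x))
          = fun x => min (f c x) (s.inf' hs (fun i => f i x)) := by
        funext x; rw [Finset.inf'_cons]
      rw [this]
      exact (hf c).min ih

end Topo

section Minimax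

variable {S₁ S₂ : Type*} [Fintype S₁] [Fintype S₂]
  [Nonempty S₁] [Nonempty S₂] [DecidableEq S₁] [DecidableEq S₂]

/-- Decomposition of a function as a combination of pure strategies. -/
lemma pure_decomp (w : S₁ → ℝ) : w = ∑ a, w a • pureStrat a := by
  funext c
  simp only [Finset.sum_apply, Pi.smul_apply, pureStrat, smul_eq_mul, mul_ite, mul_one, mul_zero]
  rw [Finset.sum_ite_eq Finset.univ c w]
  simp

lemma clm_eq_sum (f : (S₁ → ℝ) →L[ℝ] ℝ) (w : S₁ → ℝ) :
    f w = ∑ a, w a * f (pureStrat a) := by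
  conv_lhs => rw [pure_decomp w]
  rw [map_sum]
  exact Finset.sum_congr rfl fun a _ => by rw [map_smul]; rfl

/-- Existence of a Nash equilibrium in the subgame restricted to `P × Q`. -/
theorem exists_NE_on (A : S₁ → S₂ → ℝ) (P : Set S₁) (Q : Set S₂)
    (hP : P.Nonempty) (hQ : Q.Nonempty) :
    ∃ x ∈ mixedOn P, ∃ y ∈ mixedOn Q,
      (∀ a ∈ P, (∑ b, A a b * y b) ≤ payoff A x y) ∧
      (∀ b ∈ Q, payoff A x y ≤ ∑ a, x a * A a b) := by
  classical
  have hQfin : Q.Finite := Q.toFinite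
  have hQfne : hQfin.toFinset.Nonempty := (Set.Finite.toFinset_nonempty _).mpr hQ
  set g : (S₁ → ℝ) → ℝ := fun z => hQfin.toFinset.inf' hQfne (fun b => ∑ a, z a * A a b)
    with hg
  have hgc : Continuous g := by
    refine continuous_finset_inf' hQfne (fun b z => ∑ a, z a * A a b) fun b => ?_
    exact continuous_finset_sum _ fun a _ => (continuous_apply a).mul continuous_const
  obtain ⟨xh, hxhmem, hxhmax⟩ :=
    (isCompact_mixedOn P).exists_isMaxOn (mixedOn_nonempty hP) hgc.continuousOn
  set v : ℝ := g xh with hv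
  have hvle : ∀ b ∈ Q, v ≤ ∑ a, xh a * A a b := fun b hb =>
    Finset.inf'_le _ (hQfin.mem_toFinset.mpr hb)
  by_cases hcase : ∃ y ∈ mixedOn Q, ∀ a ∈ P, (∑ b, A a b * y b) ≤ v
  · obtain ⟨y, hy, hyle⟩ := hcase
    refine ⟨xh, hxhmem, y, hy, fun a ha => ?_, fun b hb => ?_⟩
    · exact (hyle a ha).trans (le_payoff_of_cols hy hvle)
    · exact (payoff_le_of_rows hxhmem hyle).trans (hvle b hb)
  · exfalso
    push_neg at hcase
    -- the linear map sending y to its vector of row payoffs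
    set L : (S₂ → ℝ) →ₗ[ℝ] (S₁ → ℝ) :=
      { toFun := fun y a => ∑ b, A a b * y b
        map_add' := fun y z => by
          funext a; simp [mul_add, Finset.sum_add_distrib]
        map_smul' := fun c y => by
          funext a
          simp only [Pi.smul_apply, smul_eq_mul, RingHom.id_apply, Finset.mul_sum]
          exact Finset.sum_congr rfl fun b _ => by ring } with hL
    set K : Set (S₁ → ℝ) := L '' mixedOn Q with hK
    have hKconv : Convex ℝ K := (convex_mixedOn Q).linear_image L
    have hKcomp : IsCompact K :=
      (isCompact_mixedOn Q).image (LinearMap.continuous_of_finiteDimensional L)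
    set D : Set (S₁ → ℝ) := {w | ∀ a ∈ P, w a ≤ v} with hD
    have hDconv : Convex ℝ D := by
      intro w hw z hz s t hs ht hst a ha
      have h1 := hw a ha; have h2 := hz a ha
      simp only [Pi.add_apply, Pi.smul_apply, smul_eq_mul]
      have e : s * v + t * v = v := by rw [← add_mul, hst, one_mul]
      have e1 : s * w a ≤ s * v := mul_le_mul_of_nonneg_left h1 hs
      have e2 : t * z a ≤ t * v := mul_le_mul_of_nonneg_left h2 ht
      linarith
    have hDclosed : IsClosed D := by
      have : D = ⋂ a, ⋂ (_ : a ∈ P), {w : S₁ → ℝ | w a ≤ v} := by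
        ext w; simp [hD, Set.mem_iInter]
      rw [this]
      exact isClosed_iInter fun a => isClosed_iInter fun _ =>
        isClosed_le (continuous_apply a) continuous_const
    have hdisj : Disjoint K D := by
      rw [Set.disjoint_left]
      rintro z ⟨y, hy, rfl⟩ hzD
      obtain ⟨a, ha, hlt⟩ := hcase y hy
      exact absurd (hzD a ha) (not_le.mpr hlt)
    obtain ⟨f, u, v', hfK, huv, hfD⟩ :=
      geometric_hahn_banach_compact_closed hKconv hKcomp hDconv hDclosed hdisj
    obtain ⟨φ, hφ⟩ : ∃ φ : S₁ → ℝ, φ = fun a => -(f (pureStrat a)) := ⟨_, rfl⟩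
    obtain ⟨Sφ, hSφ⟩ : ∃ S : ℝ, S = ∑ a, φ a := ⟨_, rfl⟩
    have hfval : ∀ (w : S₁ → ℝ), f w = -∑ a, w a * φ a := by
      intro w
      rw [clm_eq_sum f w, ← Finset.sum_neg_distrib]
      exact Finset.sum_congr rfl fun a _ => by rw [hφ]; ring
    have hfconst : f (fun _ => v) = -(v * Sφ) := by
      rw [hfval, hSφ, Finset.mul_sum]
    have hconstD : ∀ (w : S₁ → ℝ), (∀ a ∈ P, w a ≤ v) → v' < f w := fun w hw => hfD w hw
    have hvSφ : v' < -(v * Sφ) := by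
      rw [← hfconst]; exact hconstD _ (fun a _ => le_rfl)
    -- value of f on perturbations of the constant function
    have hpert : ∀ (t : ℝ) (a : S₁),
        f (fun a' => v - t * pureStrat a a') = -(v * Sφ) + t * φ a := by
      intro t a
      rw [hfval]
      have : (∑ a', (v - t * pureStrat a a') * φ a')
          = v * Sφ - t * φ a := by
        simp only [sub_mul]
        rw [Finset.sum_sub_distrib, ← Finset.mul_sum, ← hSφ]
        congr 1
        have : (∑ a', t * pureStrat a a' * φ a') = t * φ a := by
          simp only [pureStrat, mul_ite, ite_mul, mul_one, mul_zero, zero_mul]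
          rw [Finset.sum_ite_eq' Finset.univ a (fun a' => t * φ a')]
          simp
        rw [this]
      rw [this]; ring
    -- φ is nonneg on P
    have hφP : ∀ a ∈ P, 0 ≤ φ a := by
      intro a ha
      by_contra hneg
      push_neg at hneg
      have ht0 : 0 < (v' + v * Sφ) / φ a := div_pos_of_neg_of_neg (by linarith) hneg
      set t : ℝ := (v' + v * Sφ) / φ a with hT
      have hwD : ∀ a' ∈ P, (fun a' => v - t * pureStrat a a') a' ≤ v := by
        intro a' _
        simp only [pureStrat]
        have : (0:ℝ) ≤ t * (if a' = a then 1 else 0) := by positivity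
        linarith
      have h1 := hconstD _ hwD
      rw [hpert t a, hT, div_mul_cancel₀ _ (by linarith : φ a ≠ 0)] at h1
      linarith
    -- φ vanishes off P
    have hφ0 : ∀ a ∉ P, φ a = 0 := by
      intro a ha
      by_contra hne
      set t : ℝ := (1 - v' - v * Sφ) / φ a with hT
      have hwD : ∀ a' ∈ P, (fun a' => v - (-t) * pureStrat a a') a' ≤ v := by
        intro a' ha'
        have hne' : a' ≠ a := fun h => ha (h ▸ ha')
        simp [pureStrat, hne']
      have h1 := hconstD _ hwD
      rw [hpert (-t) a, hT] at h1
      rw [neg_mul, div_mul_cancel₀ _ hne] at h1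
      linarith
    have hφnn : ∀ a, 0 ≤ φ a := by
      intro a
      by_cases ha : a ∈ P
      · exact hφP a ha
      · rw [hφ0 a ha]
    -- key strict inequality for columns in Q
    have hcol : ∀ b ∈ Q, v * Sφ < ∑ a, φ a * A a b := by
      intro b hb
      have hmemK : L (pureStrat b) ∈ K := ⟨pureStrat b, pure_mem_mixedOn hb, rfl⟩
      have h1 : f (L (pureStrat b)) < u := hfK _ hmemK
      have hLpb : L (pureStrat b) = fun a => A a b := by
        funext a
        show (∑ b', A a b' * pureStrat b b') = A a b
        simp [pureStrat]
      have e1 : f (L (pureStrat b)) = -∑ a, A a b * φ a := by rw [hLpb, hfval]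
      have h2 : -∑ a, A a b * φ a < -(v * Sφ) := by
        rw [← e1]; linarith
      have h3 : v * Sφ < ∑ a, A a b * φ a := by linarith
      calc v * Sφ < ∑ a, A a b * φ a := h3
        _ = ∑ a, φ a * A a b := Finset.sum_congr rfl fun a _ => by ring
    -- Sφ is positive
    have hSφpos : 0 < Sφ := by
      have hSnn : 0 ≤ Sφ := hSφ ▸ Finset.sum_nonneg fun a _ => hφnn a
      rcases hSnn.lt_or_eq with h | h
      · exact h
      · exfalso
        obtain ⟨b, hb⟩ := hQ
        have hz : ∀ a, φ a = 0 := by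
          intro a
          exact (Finset.sum_eq_zero_iff_of_nonneg (fun a _ => hφnn a)).mp
            (hSφ ▸ h.symm) a (Finset.mem_univ a)
        have h0 : (∑ a, φ a * A a b) = 0 :=
          Finset.sum_eq_zero fun a _ => by rw [hz a, zero_mul]
        have := hcol b hb
        rw [h0, ← h, mul_zero] at this
        exact lt_irrefl 0 this
    -- normalized strategy beats v, contradiction with maximality
    have hx'mem : (fun a => φ a / Sφ) ∈ mixedOn P := by
      refine ⟨⟨fun a => div_nonneg (hφnn a) hSφpos.le, ?_⟩, fun a ha => ?_⟩
      · rw [← Finset.sum_div, ← hSφ, div_self hSφpos.ne']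
      · show φ a / Sφ = 0
        rw [hφ0 a ha, zero_div]
    have hgx' : v < g (fun a => φ a / Sφ) := by
      show v < hQfin.toFinset.inf' hQfne fun b => ∑ a, (φ a / Sφ) * A a b
      obtain ⟨b, hbmem, hbeq⟩ := Finset.exists_mem_eq_inf' hQfne
        (fun b => (∑ a, (φ a / Sφ) * A a b : ℝ))
      rw [hbeq]
      have hbQ : b ∈ Q := hQfin.mem_toFinset.mp hbmem
      have hcong : (∑ a, (φ a / Sφ) * A a b) = (∑ a, φ a * A a b) / Sφ := by
        rw [Finset.sum_div]
        exact Finset.sum_congr rfl fun a _ => by ring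
      rw [hcong, lt_div_iff₀ hSφpos]
      have := hcol b hbQ
      linarith
    exact absurd (hxhmax hx'mem) (not_le.mpr hgx')

end Minimax

section Perturb

variable {S₁ S₂ : Type*} [Fintype S₁] [Fintype S₂]
  [Nonempty S₁] [Nonempty S₂] [DecidableEq S₁] [DecidableEq S₂]

/-- If `x` maximizes `minVal` over `mixedOn T` and `x' ∈ mixedOn T`, then some pure
best response `b` to `x` satisfies `payoff(x',b) ≤ minVal x`. -/
lemma exists_pure_br_col (A : S₁ → S₂ → ℝ) {T : Set S₁} {x x' : S₁ → ℝ}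
    (hx : x ∈ mixedOn T) (hmax : ∀ z ∈ mixedOn T, minVal A z ≤ minVal A x)
    (hx' : x' ∈ mixedOn T) :
    ∃ b, (∑ a, x a * A a b) = minVal A x ∧ (∑ a, x' a * A a b) ≤ minVal A x := by
  classical
  set v₁ : ℝ := minVal A x with hv₁
  have hF1 : ∀ b, v₁ ≤ ∑ a, x a * A a b := by
    intro b
    rw [hv₁, minVal_eq]
    exact Finset.inf'_le _ (Finset.mem_univ b)
  have key : ∀ ε : ℝ, 0 < ε → ε < 1 →
      ∃ b, (1-ε) * (∑ a, x a * A a b) + ε * (∑ a, x' a * A a b) ≤ v₁ := by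
    intro ε hε0 hε1
    have hz : ((1-ε) • x + ε • x') ∈ mixedOn T :=
      convex_mixedOn T hx hx' (by linarith) hε0.le (by ring)
    have hle : minVal A ((1-ε) • x + ε • x') ≤ v₁ := hmax _ hz
    rw [minVal_eq] at hle
    obtain ⟨b, -, hbeq⟩ := Finset.exists_mem_eq_inf' (Finset.univ_nonempty (α := S₂))
      (fun b => (∑ a, ((1-ε) • x + ε • x') a * A a b : ℝ))
    rw [hbeq] at hle
    refine ⟨b, le_trans (le_of_eq ?_) hle⟩
    rw [Finset.mul_sum, Finset.mul_sum, ← Finset.sum_add_distrib]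
    exact (Finset.sum_congr rfl fun a _ => by
      simp only [Pi.add_apply, Pi.smul_apply, smul_eq_mul]; ring).symm
  -- the "second conjunct" holds for any witness of `key`
  have second : ∀ ε : ℝ, 0 < ε → ε < 1 → ∀ b,
      (1-ε) * (∑ a, x a * A a b) + ε * (∑ a, x' a * A a b) ≤ v₁ →
      (∑ a, x' a * A a b) ≤ v₁ := by
    intro ε hε0 hε1 b hb
    by_contra hcon
    push_neg at hcon
    have e1 : ε * v₁ < ε * (∑ a, x' a * A a b) := mul_lt_mul_of_pos_left hcon hε0
    have e2 : (1-ε) * v₁ ≤ (1-ε) * (∑ a, x a * A a b) :=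
      mul_le_mul_of_nonneg_left (hF1 b) (by linarith)
    linarith
  by_cases hall : ∀ b, (∑ a, x a * A a b) ≤ v₁
  · obtain ⟨b, hb⟩ := key (1/2) (by norm_num) (by norm_num)
    exact ⟨b, le_antisymm (hall b) (hF1 b),
      second (1/2) (by norm_num) (by norm_num) b hb⟩
  · push_neg at hall
    obtain ⟨b₀, hb₀⟩ := hall
    set F : Finset S₂ := Finset.univ.filter (fun b => v₁ < ∑ a, x a * A a b) with hF
    have hFne : F.Nonempty := ⟨b₀, by simp [hF, hb₀]⟩
    set δ : ℝ := F.inf' hFne (fun b => (∑ a, x a * A a b) - v₁) with hδ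
    have hδpos : 0 < δ := by
      rw [hδ]
      rw [Finset.lt_inf'_iff]
      intro b hb
      rw [hF, Finset.mem_filter] at hb
      linarith [hb.2]
    set R0 : ℝ := max (Finset.univ.sup' (Finset.univ_nonempty (α := S₂))
      (fun b => v₁ - ∑ a, x' a * A a b)) 0 with hR0
    have hR0nn : 0 ≤ R0 := le_max_right _ _
    have hRb : ∀ b, v₁ - (∑ a, x' a * A a b) ≤ R0 := fun b =>
      le_trans (Finset.le_sup' (f := fun b => v₁ - ∑ a, x' a * A a b) (Finset.mem_univ b))
        (le_max_left _ _)
    set ε : ℝ := min (1/2) (δ / (4 * R0 + 1)) with hε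
    have hε0 : 0 < ε := lt_min (by norm_num) (div_pos hδpos (by linarith))
    have hεhalf : ε ≤ 1/2 := min_le_left _ _
    have hεle : ε ≤ δ / (4 * R0 + 1) := min_le_right _ _
    obtain ⟨b, hb⟩ := key ε hε0 (by linarith)
    refine ⟨b, ?_, second ε hε0 (by linarith) b hb⟩
    by_contra hne
    have hlt : v₁ < ∑ a, x a * A a b := lt_of_le_of_ne (hF1 b) (Ne.symm hne)
    have hδle : δ ≤ (∑ a, x a * A a b) - v₁ := by
      rw [hδ]
      exact Finset.inf'_le _ (by simp [hF, hlt])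
    have h2 : (1-ε) * ((∑ a, x a * A a b) - v₁) ≤ ε * (v₁ - ∑ a, x' a * A a b) := by
      linarith
    have h3 : (1/2) * δ ≤ (1-ε) * ((∑ a, x a * A a b) - v₁) := by
      have := mul_le_mul_of_nonneg_right (by linarith : (1/2:ℝ) ≤ 1 - ε)
        (by linarith : (0:ℝ) ≤ (∑ a, x a * A a b) - v₁)
      nlinarith [hδle]
    have h4 : ε * (v₁ - ∑ a, x' a * A a b) ≤ ε * R0 :=
      mul_le_mul_of_nonneg_left (hRb b) hε0.le
    have h5 : ε * R0 ≤ δ / (4 * R0 + 1) * R0 :=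
      mul_le_mul_of_nonneg_right hεle hR0nn
    have h6 : δ / (4 * R0 + 1) * R0 < (1/2) * δ := by
      rw [div_mul_eq_mul_div, div_lt_iff₀ (by linarith : (0:ℝ) < 4 * R0 + 1)]
      nlinarith [mul_pos hδpos (by linarith : (0:ℝ) < 2 * R0 + 1)]
    linarith

/-- Dual version: some pure best response `a` to `y` satisfies `payoff(a,y') ≥ maxVal y`. -/
lemma exists_pure_br_row (A : S₁ → S₂ → ℝ) {T : Set S₂} {y y' : S₂ → ℝ}
    (hy : y ∈ mixedOn T) (hmin : ∀ z ∈ mixedOn T, maxVal A y ≤ maxVal A z)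
    (hy' : y' ∈ mixedOn T) :
    ∃ a, (∑ b, A a b * y b) = maxVal A y ∧ maxVal A y ≤ ∑ b, A a b * y' b := by
  classical
  set v₂ : ℝ := maxVal A y with hv₂
  have hF1 : ∀ a, (∑ b, A a b * y b) ≤ v₂ := by
    intro a
    rw [hv₂, maxVal_eq]
    exact Finset.le_sup' (fun a => (∑ b, A a b * y b : ℝ)) (Finset.mem_univ a)
  have key : ∀ ε : ℝ, 0 < ε → ε < 1 →
      ∃ a, v₂ ≤ (1-ε) * (∑ b, A a b * y b) + ε * (∑ b, A a b * y' b) := by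
    intro ε hε0 hε1
    have hz : ((1-ε) • y + ε • y') ∈ mixedOn T :=
      convex_mixedOn T hy hy' (by linarith) hε0.le (by ring)
    have hle : v₂ ≤ maxVal A ((1-ε) • y + ε • y') := hmin _ hz
    rw [maxVal_eq] at hle
    obtain ⟨a, -, haeq⟩ := Finset.exists_mem_eq_sup' (Finset.univ_nonempty (α := S₁))
      (fun a => (∑ b, A a b * ((1-ε) • y + ε • y') b : ℝ))
    rw [haeq] at hle
    refine ⟨a, le_trans hle (le_of_eq ?_)⟩
    rw [Finset.mul_sum, Finset.mul_sum, ← Finset.sum_add_distrib]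
    exact Finset.sum_congr rfl fun b _ => by
      simp only [Pi.add_apply, Pi.smul_apply, smul_eq_mul]; ring
  have second : ∀ ε : ℝ, 0 < ε → ε < 1 → ∀ a,
      v₂ ≤ (1-ε) * (∑ b, A a b * y b) + ε * (∑ b, A a b * y' b) →
      v₂ ≤ ∑ b, A a b * y' b := by
    intro ε hε0 hε1 a ha
    by_contra hcon
    push_neg at hcon
    have e1 : ε * (∑ b, A a b * y' b) < ε * v₂ := mul_lt_mul_of_pos_left hcon hε0
    have e2 : (1-ε) * (∑ b, A a b * y b) ≤ (1-ε) * v₂ :=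
      mul_le_mul_of_nonneg_left (hF1 a) (by linarith)
    linarith
  by_cases hall : ∀ a, v₂ ≤ (∑ b, A a b * y b)
  · obtain ⟨a, ha⟩ := key (1/2) (by norm_num) (by norm_num)
    exact ⟨a, le_antisymm (hF1 a) (hall a),
      second (1/2) (by norm_num) (by norm_num) a ha⟩
  · push_neg at hall
    obtain ⟨a₀, ha₀⟩ := hall
    set F : Finset S₁ := Finset.univ.filter (fun a => (∑ b, A a b * y b) < v₂) with hF
    have hFne : F.Nonempty := ⟨a₀, by simp [hF, ha₀]⟩
    set δ : ℝ := F.inf' hFne (fun a => v₂ - ∑ b, A a b * y b) with hδ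
    have hδpos : 0 < δ := by
      rw [hδ, Finset.lt_inf'_iff]
      intro a ha
      rw [hF, Finset.mem_filter] at ha
      linarith [ha.2]
    set R0 : ℝ := max (Finset.univ.sup' (Finset.univ_nonempty (α := S₁))
      (fun a => (∑ b, A a b * y' b) - v₂)) 0 with hR0
    have hR0nn : 0 ≤ R0 := le_max_right _ _
    have hRb : ∀ a, (∑ b, A a b * y' b) - v₂ ≤ R0 := fun a =>
      le_trans (Finset.le_sup' (f := fun a => (∑ b, A a b * y' b) - v₂) (Finset.mem_univ a))
        (le_max_left _ _)
    set ε : ℝ := min (1/2) (δ / (4 * R0 + 1)) with hε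
    have hε0 : 0 < ε := lt_min (by norm_num) (div_pos hδpos (by linarith))
    have hεhalf : ε ≤ 1/2 := min_le_left _ _
    have hεle : ε ≤ δ / (4 * R0 + 1) := min_le_right _ _
    obtain ⟨a, ha⟩ := key ε hε0 (by linarith)
    refine ⟨a, ?_, second ε hε0 (by linarith) a ha⟩
    by_contra hne
    have hlt : (∑ b, A a b * y b) < v₂ := lt_of_le_of_ne (hF1 a) hne
    have hδle : δ ≤ v₂ - ∑ b, A a b * y b := by
      rw [hδ]
      exact Finset.inf'_le _ (by simp [hF, hlt])
    have h2 : (1-ε) * (v₂ - ∑ b, A a b * y b) ≤ ε * ((∑ b, A a b * y' b) - v₂) := by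
      linarith
    have h3 : (1/2) * δ ≤ (1-ε) * (v₂ - ∑ b, A a b * y b) := by
      have := mul_le_mul_of_nonneg_right (by linarith : (1/2:ℝ) ≤ 1 - ε)
        (by linarith : (0:ℝ) ≤ v₂ - ∑ b, A a b * y b)
      nlinarith [hδle]
    have h4 : ε * ((∑ b, A a b * y' b) - v₂) ≤ ε * R0 :=
      mul_le_mul_of_nonneg_left (hRb a) hε0.le
    have h5 : ε * R0 ≤ δ / (4 * R0 + 1) * R0 :=
      mul_le_mul_of_nonneg_right hεle hR0nn
    have h6 : δ / (4 * R0 + 1) * R0 < (1/2) * δ := by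
      rw [div_mul_eq_mul_div, div_lt_iff₀ (by linarith : (0:ℝ) < 4 * R0 + 1)]
      nlinarith [mul_pos hδpos (by linarith : (0:ℝ) < 2 * R0 + 1)]
    linarith

end Perturb

section Crux

variable {S₁ S₂ : Type*} [Fintype S₁] [Fintype S₂]
  [Nonempty S₁] [Nonempty S₂] [DecidableEq S₁] [DecidableEq S₂]

/-- If every pure best response to `y` lies in `T₁` and every pure best response to `x`
lies in `T₂`, then the pair is a Nash equilibrium (value gap closes). -/
lemma crux (A : S₁ → S₂ → ℝ) {T₁ : Set S₁} {T₂ : Set S₂} {x : S₁ → ℝ} {y : S₂ → ℝ}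
    (hx : x ∈ mixedOn T₁) (hy : y ∈ mixedOn T₂)
    (hxmax : ∀ z ∈ mixedOn T₁, minVal A z ≤ minVal A x)
    (hymin : ∀ z ∈ mixedOn T₂, maxVal A y ≤ maxVal A z)
    (hPsub : ∀ a, (∑ b, A a b * y b) = maxVal A y → a ∈ T₁)
    (hQsub : ∀ b, (∑ a, x a * A a b) = minVal A x → b ∈ T₂) :
    maxVal A y ≤ minVal A x := by
  classical
  set P : Set S₁ := {a | (∑ b, A a b * y b) = maxVal A y} with hP
  set Q : Set S₂ := {b | (∑ a, x a * A a b) = minVal A x} with hQ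
  have hPne : P.Nonempty := by
    obtain ⟨a₀, -, ha₀⟩ := Finset.exists_mem_eq_sup' (Finset.univ_nonempty (α := S₁))
      (fun a => (∑ b, A a b * y b : ℝ))
    exact ⟨a₀, by rw [hP]; simp only [Set.mem_setOf_eq]; rw [maxVal_eq, ha₀]⟩
  have hQne : Q.Nonempty := by
    obtain ⟨b₀, -, hb₀⟩ := Finset.exists_mem_eq_inf' (Finset.univ_nonempty (α := S₂))
      (fun b => (∑ a, x a * A a b : ℝ))
    exact ⟨b₀, by rw [hQ]; simp only [Set.mem_setOf_eq]; rw [minVal_eq, hb₀]⟩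
  obtain ⟨xs, hxs, ys, hys, hrow, hcol⟩ := exists_NE_on A P Q hPne hQne
  have hxsT : xs ∈ mixedOn T₁ := mixedOn_mono (fun a ha => hPsub a ha) hxs
  have hysT : ys ∈ mixedOn T₂ := mixedOn_mono (fun b hb => hQsub b hb) hys
  obtain ⟨b₀, hb₀Q, hb₀le⟩ := exists_pure_br_col A hx hxmax hxsT
  obtain ⟨a₀, ha₀P, ha₀ge⟩ := exists_pure_br_row A hy hymin hysT
  have h1 : payoff A xs ys ≤ ∑ a, xs a * A a b₀ := hcol b₀ hb₀Q
  have h2 : (∑ b, A a₀ b * ys b) ≤ payoff A xs ys := hrow a₀ ha₀P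
  linarith

end Crux

/-- ADO converges to a Nash equilibrium in at most as many
iterations as there are pure strategies. -/
theorem ado_converges
    {S₁ S₂ : Type*} [Fintype S₁] [Fintype S₂] [Nonempty S₁] [Nonempty S₂]
    [DecidableEq S₁] [DecidableEq S₂]
    (A : S₁ → S₂ → ℝ)
    (T₁ : ℕ → Set S₁) (T₂ : ℕ → Set S₂)
    (hT₁ne : ∀ t, (T₁ t).Nonempty) (hT₂ne : ∀ t, (T₂ t).Nonempty)
    (x : ℕ → S₁ → ℝ) (y : ℕ → S₂ → ℝ)
    -- xᵗ attains max_{x∈Δ(T₁ᵗ)} min_{y∈Δ(S₂)} v(x,y)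
    (hx : ∀ t, x t ∈ mixedOn (T₁ t))
    (hxmax : ∀ t, ∀ x' ∈ mixedOn (T₁ t), minVal A x' ≤ minVal A (x t))
    -- yᵗ attains min_{y∈Δ(T₂ᵗ)} max_{x∈Δ(S₁)} v(x,y)
    (hy : ∀ t, y t ∈ mixedOn (T₂ t))
    (hymin : ∀ t, ∀ y' ∈ mixedOn (T₂ t), maxVal A (y t) ≤ maxVal A y')
    (β₁ : ℕ → S₁) (β₂ : ℕ → S₂)
    -- T₁ᵗ⁺¹ = T₁ᵗ ∪ {β₁ᵗ}, β₁ᵗ a pure best response to yᵗ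
    (hT₁succ : ∀ t, T₁ (t + 1) = T₁ t ∪ {β₁ t})
    (hβ₁br : ∀ t, payoff A (pureStrat (β₁ t)) (y t) = maxVal A (y t))
    -- β₁ᵗ is chosen outside T₁ᵗ whenever some pure best response to yᵗ lies outside T₁ᵗ
    (hβ₁new : ∀ t, (∃ a ∉ T₁ t, payoff A (pureStrat a) (y t) = maxVal A (y t)) →
      β₁ t ∉ T₁ t)
    -- T₂ᵗ⁺¹ = T₂ᵗ ∪ {β₂ᵗ}, β₂ᵗ a pure best response to xᵗ
    (hT₂succ : ∀ t, T₂ (t + 1) = T₂ t ∪ {β₂ t})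
    (hβ₂br : ∀ t, payoff A (x t) (pureStrat (β₂ t)) = minVal A (x t))
    -- β₂ᵗ is chosen outside T₂ᵗ whenever some pure best response to xᵗ lies outside T₂ᵗ
    (hβ₂new : ∀ t, (∃ b ∉ T₂ t, payoff A (x t) (pureStrat b) = minVal A (x t)) →
      β₂ t ∉ T₂ t) :
    ∃ t ≤ Fintype.card S₁ + Fintype.card S₂,
      (∀ x' ∈ mixed S₁, payoff A x' (y t) ≤ payoff A (x t) (y t)) ∧
        (∀ y' ∈ mixed S₂, payoff A (x t) (y t) ≤ payoff A (x t) y') := by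
  classical
  set N : ℕ := Fintype.card S₁ + Fintype.card S₂ with hN
  -- if no new best response can be added for either player, we have an equilibrium
  have hNE : ∀ t, β₁ t ∈ T₁ t → β₂ t ∈ T₂ t →
      (∀ x' ∈ mixed S₁, payoff A x' (y t) ≤ payoff A (x t) (y t)) ∧
        (∀ y' ∈ mixed S₂, payoff A (x t) (y t) ≤ payoff A (x t) y') := by
    intro t h1 h2
    have hPsub : ∀ a, (∑ b, A a b * y t b) = maxVal A (y t) → a ∈ T₁ t := by
      intro a ha
      by_contra hna
      exact hβ₁new t ⟨a, hna, by rw [payoff_pure_left]; exact ha⟩ h1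
    have hQsub : ∀ b, (∑ a, x t a * A a b) = minVal A (x t) → b ∈ T₂ t := by
      intro b hb
      by_contra hnb
      exact hβ₂new t ⟨b, hnb, by rw [payoff_pure_right]; exact hb⟩ h2
    have hkey : maxVal A (y t) ≤ minVal A (x t) :=
      crux A (hx t) (hy t) (hxmax t) (hymin t) hPsub hQsub
    have hrowbd : ∀ a, (∑ b, A a b * y t b) ≤ maxVal A (y t) := by
      intro a
      rw [maxVal_eq]
      exact Finset.le_sup' (fun a => (∑ b, A a b * y t b : ℝ)) (Finset.mem_univ a)
    have hcolbd : ∀ b, minVal A (x t) ≤ ∑ a, x t a * A a b := by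
      intro b
      rw [minVal_eq]
      exact Finset.inf'_le _ (Finset.mem_univ b)
    constructor
    · intro x' hx'
      have e1 : payoff A x' (y t) ≤ maxVal A (y t) :=
        payoff_le_of_rows (P := Set.univ) ⟨hx', fun a ha => absurd (Set.mem_univ a) ha⟩
          fun a _ => hrowbd a
      have e2 : minVal A (x t) ≤ payoff A (x t) (y t) :=
        le_payoff_of_cols (Q := Set.univ) ⟨(hy t).1, fun b hb => absurd (Set.mem_univ b) hb⟩
          fun b _ => hcolbd b
      linarith
    · intro y' hy'
      have e1 : payoff A (x t) (y t) ≤ maxVal A (y t) :=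
        payoff_le_of_rows (P := Set.univ) ⟨(hx t).1, fun a ha => absurd (Set.mem_univ a) ha⟩
          fun a _ => hrowbd a
      have e2 : minVal A (x t) ≤ payoff A (x t) y' :=
        le_payoff_of_cols (Q := Set.univ) ⟨hy', fun b hb => absurd (Set.mem_univ b) hb⟩
          fun b _ => hcolbd b
      linarith
  by_contra hcon
  have hgrow : ∀ t, t ≤ N → β₁ t ∉ T₁ t ∨ β₂ t ∉ T₂ t := by
    intro t ht
    by_contra hb
    push_neg at hb
    exact hcon ⟨t, ht, hNE t hb.1 hb.2⟩
  have hcard : ∀ t, t ≤ N →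
      (T₁ t).ncard + (T₂ t).ncard + 1 ≤ (T₁ (t+1)).ncard + (T₂ (t+1)).ncard := by
    intro t ht
    rw [hT₁succ t, hT₂succ t, Set.union_singleton, Set.union_singleton]
    rcases hgrow t ht with h | h
    · have e1 : (insert (β₁ t) (T₁ t)).ncard = (T₁ t).ncard + 1 :=
        Set.ncard_insert_of_notMem h
      have e2 : (T₂ t).ncard ≤ (insert (β₂ t) (T₂ t)).ncard :=
        Set.ncard_le_ncard (Set.subset_insert _ _)
      omega
    · have e1 : (insert (β₂ t) (T₂ t)).ncard = (T₂ t).ncard + 1 :=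
        Set.ncard_insert_of_notMem h
      have e2 : (T₁ t).ncard ≤ (insert (β₁ t) (T₁ t)).ncard :=
        Set.ncard_le_ncard (Set.subset_insert _ _)
      omega
  have hind : ∀ k, k ≤ N + 1 → k + 2 ≤ (T₁ k).ncard + (T₂ k).ncard := by
    intro k
    induction k with
    | zero =>
        intro _
        have h1 := (Set.ncard_pos (Set.toFinite _)).mpr (hT₁ne 0)
        have h2 := (Set.ncard_pos (Set.toFinite _)).mpr (hT₂ne 0)
        omega
    | succ k ih =>
        intro hk
        have h1 := ih (by omega)
        have h2 := hcard k (by omega)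
        omega
  have hb1 : (T₁ (N+1)).ncard ≤ Fintype.card S₁ := by
    refine le_trans (Set.ncard_le_ncard (Set.subset_univ _)) ?_
    rw [Set.ncard_univ, Nat.card_eq_fintype_card]
  have hb2 : (T₂ (N+1)).ncard ≤ Fintype.card S₂ := by
    refine le_trans (Set.ncard_le_ncard (Set.subset_univ _)) ?_
    rw [Set.ncard_univ, Nat.card_eq_fintype_card]
  have := hind (N+1) le_rfl
  omega
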